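/- Let k be a field of characteristic not equal to 2 in which every element has a square root. Then there does not exist a 2-step nilpotent Lie algebra over k that is minimally generated by 4 elements, has dimension 8, and has breadth type (0,3). -/

import Mathlib

/- Common definitions: breadth, breadth type, derived subalgebra, Camina Lie algebras,
nilpotency class, minimal generation, and free nilpotent Lie algebras. -/

open Module

section Defs

variable (k : Type*) [Field k]

/-- The breadth of an element `x` of a Lie algebra: the rank of the adjoint map `ad x`
(equivalently, the codimension of the centralizer of `x`). -/
noncomputable def breadth (L : Type*) [LieRing L] [LieAlgebra k L] (x : L) : ℕ :=
  Module.finrank k (LinearMap.range (LieAlgebra.ad k L x))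

/-- A Lie algebra has breadth type `S` if `S` is exactly the set of breadths of its elements. -/
def HasBreadthType (L : Type*) [LieRing L] [LieAlgebra k L] (S : Set ℕ) : Prop :=
  Set.range (breadth k L) = S

/-- The derived subalgebra `L' = [L, L]` as a Lie ideal. -/
abbrev derivedIdeal (L : Type*) [LieRing L] [LieAlgebra k L] : LieIdeal k L :=
  ⁅(⊤ : LieIdeal k L), (⊤ : LieIdeal k L)⁆

lemma lie_mem_derivedIdeal (L : Type*) [LieRing L] [LieAlgebra k L] (x y : L) :
    ⁅x, y⁆ ∈ derivedIdeal k L :=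
  LieSubmodule.lie_mem_lie (LieSubmodule.mem_top x) (LieSubmodule.mem_top y)

/-- A Camina Lie algebra: `[x, L] = L'` for every `x ∈ L \ L'`. -/
def IsCamina (L : Type*) [LieRing L] [LieAlgebra k L] : Prop :=
  ∀ x : L, x ∉ derivedIdeal k L →
    LinearMap.range (LieAlgebra.ad k L x) = (derivedIdeal k L).toSubmodule

/-- A Lie algebra is nilpotent of class exactly `c`. -/
def IsNilpotentOfClass (L : Type*) [LieRing L] [LieAlgebra k L] (c : ℕ) : Prop :=
  LieModule.lowerCentralSeries k L L c = ⊥ ∧ ∀ b < c, LieModule.lowerCentralSeries k L L b ≠ ⊥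

/-- A Lie algebra is minimally generated by `n` elements: some `n` elements generate it
and no fewer elements generate it. -/
def MinimallyGenerated (L : Type*) [LieRing L] [LieAlgebra k L] (n : ℕ) : Prop :=
  (∃ s : Finset L, s.card = n ∧ LieSubalgebra.lieSpan k L ↑s = ⊤) ∧
  ∀ s : Finset L, LieSubalgebra.lieSpan k L ↑s = ⊤ → n ≤ s.card

/-- The free `c`-step nilpotent Lie algebra on `n` generators: the quotient of the free
Lie algebra on `n` generators by the `(c+1)`-st term `γ_{c+1}` of its lower central series. -/
abbrev FreeNilp (c n : ℕ) :=
  FreeLieAlgebra k (Fin n) ⧸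
    LieModule.lowerCentralSeries k (FreeLieAlgebra k (Fin n)) (FreeLieAlgebra k (Fin n)) c

/-- The canonical generators of the free `c`-step nilpotent Lie algebra on `n` generators. -/
noncomputable def gen (c n : ℕ) (i : Fin n) : FreeNilp k c n :=
  LieSubmodule.Quotient.mk
    (N := LieModule.lowerCentralSeries k (FreeLieAlgebra k (Fin n)) (FreeLieAlgebra k (Fin n)) c)
    (FreeLieAlgebra.of k i)

end Defs


namespace NoDim8Aux

variable {k : Type*} [Field k]

@[simp] lemma vec6_five {α : Type*} (a b c d e f : α) : ![a, b, c, d, e, f] 5 = f := rfl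
@[simp] lemma vec6_four {α : Type*} (a b c d e f : α) : ![a, b, c, d, e, f] 4 = e := rfl
@[simp] lemma vec6_three {α : Type*} (a b c d e f : α) : ![a, b, c, d, e, f] 3 = d := rfl
@[simp] lemma vec6_two {α : Type*} (a b c d e f : α) : ![a, b, c, d, e, f] 2 = c := rfl
@[simp] lemma vec6_one {α : Type*} (a b c d e f : α) : ![a, b, c, d, e, f] 1 = b := rfl
@[simp] lemma vec6_zero {α : Type*} (a b c d e f : α) : ![a, b, c, d, e, f] 0 = a := rfl

/-- The wedge coordinates of a pair of vectors in `k⁴`, ordered `(01, 02, 03, 12, 13, 23)`. -/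
def wedge (c d : Fin 4 → k) : Fin 6 → k :=
  ![c 0 * d 1 - c 1 * d 0, c 0 * d 2 - c 2 * d 0, c 0 * d 3 - c 3 * d 0,
    c 1 * d 2 - c 2 * d 1, c 1 * d 3 - c 3 * d 1, c 2 * d 3 - c 3 * d 2]

@[simp] lemma wedge_a0 (c d : Fin 4 → k) : wedge c d 0 = c 0 * d 1 - c 1 * d 0 := rfl
@[simp] lemma wedge_a1 (c d : Fin 4 → k) : wedge c d 1 = c 0 * d 2 - c 2 * d 0 := rfl
@[simp] lemma wedge_a2 (c d : Fin 4 → k) : wedge c d 2 = c 0 * d 3 - c 3 * d 0 := rfl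
@[simp] lemma wedge_a3 (c d : Fin 4 → k) : wedge c d 3 = c 1 * d 2 - c 2 * d 1 := rfl
@[simp] lemma wedge_a4 (c d : Fin 4 → k) : wedge c d 4 = c 1 * d 3 - c 3 * d 1 := rfl
@[simp] lemma wedge_a5 (c d : Fin 4 → k) : wedge c d 5 = c 2 * d 3 - c 3 * d 2 := rfl

lemma funext6 {α : Type*} {f g : Fin 6 → α} (h0 : f 0 = g 0) (h1 : f 1 = g 1)
    (h2 : f 2 = g 2) (h3 : f 3 = g 3) (h4 : f 4 = g 4) (h5 : f 5 = g 5) : f = g := by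
  funext m
  fin_cases m <;> assumption

/-- `wedge c` as a linear map in the second variable. -/
def wedgeMap (c : Fin 4 → k) : (Fin 4 → k) →ₗ[k] (Fin 6 → k) where
  toFun := wedge c
  map_add' d d' := by
    refine funext6 ?_ ?_ ?_ ?_ ?_ ?_ <;> simp <;> ring
  map_smul' t d := by
    refine funext6 ?_ ?_ ?_ ?_ ?_ ?_ <;> simp <;> ring

lemma wedge_eq_zero_imp {c d : Fin 4 → k} {i0 : Fin 4} (hc : c i0 ≠ 0)
    (h : wedge c d = 0) : d = (d i0 / c i0) • c := by
  have h0 : c 0 * d 1 - c 1 * d 0 = 0 := congrFun h 0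
  have h1 : c 0 * d 2 - c 2 * d 0 = 0 := congrFun h 1
  have h2 : c 0 * d 3 - c 3 * d 0 = 0 := congrFun h 2
  have h3 : c 1 * d 2 - c 2 * d 1 = 0 := congrFun h 3
  have h4 : c 1 * d 3 - c 3 * d 1 = 0 := congrFun h 4
  have h5 : c 2 * d 3 - c 3 * d 2 = 0 := congrFun h 5
  have key : ∀ j : Fin 4, c i0 * d j = c j * d i0 := by
    intro j
    fin_cases i0 <;> fin_cases j <;>
      first
        | rfl
        | exact sub_eq_zero.mp h0 | exact (sub_eq_zero.mp h0).symm
        | exact sub_eq_zero.mp h1 | exact (sub_eq_zero.mp h1).symm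
        | exact sub_eq_zero.mp h2 | exact (sub_eq_zero.mp h2).symm
        | exact sub_eq_zero.mp h3 | exact (sub_eq_zero.mp h3).symm
        | exact sub_eq_zero.mp h4 | exact (sub_eq_zero.mp h4).symm
        | exact sub_eq_zero.mp h5 | exact (sub_eq_zero.mp h5).symm
  funext j
  have hj := key j
  rw [Pi.smul_apply, smul_eq_mul]
  field_simp
  linear_combination hj

lemma aux_sup_top {L : Type*} [AddCommGroup L] [Module k L]
    {D : Submodule k L} {n : ℕ} (e : Basis (Fin n) k (L ⧸ D))
    (x : Fin n → L) (hx : ∀ i, D.mkQ (x i) = e i) :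
    Submodule.span k (Set.range x) ⊔ D = ⊤ := by
  rw [eq_top_iff]
  rintro u -
  have h1 : D.mkQ u ∈ Submodule.map D.mkQ (Submodule.span k (Set.range x)) := by
    rw [Submodule.map_span, ← Set.range_comp]
    have hcomp : (⇑D.mkQ ∘ x) = ⇑e := funext hx
    rw [hcomp, e.span_eq]
    exact Submodule.mem_top
  obtain ⟨w, hw, hwu⟩ := h1
  have hd : u - w ∈ D := by
    rw [← Submodule.ker_mkQ D, LinearMap.mem_ker, map_sub, hwu, sub_self]
  exact Submodule.mem_sup.mpr ⟨w, hw, u - w, hd, by abel⟩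

end NoDim8Aux

open NoDim8Aux

set_option maxHeartbeats 2000000 in
set_option synthInstance.maxHeartbeats 200000 in
theorem no_dim_eight_breadth_type_zero_three
    (k : Type*) [Field k] (hchar : ringChar k ≠ 2) (hsq : ∀ a : k, IsSquare a) :
    ∀ (L : Type*) [LieRing L] [LieAlgebra k L],
      IsNilpotentOfClass k L 2 → MinimallyGenerated k L 4 → finrank k L = 8 →
      ¬ HasBreadthType k L {0, 3} := by
  intro L _ _ hnil hmin hdim hbt
  classical
  obtain ⟨hc2, -⟩ := hnil
  have h2k : (2 : k) ≠ 0 := by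
    intro h
    have hdvd : ringChar k ∣ 2 := (ringChar.spec k 2).mp (by exact_mod_cast h)
    rcases (Nat.prime_two.eq_one_or_self_of_dvd _ hdvd) with h1 | h1
    · exact CharP.ringChar_ne_one h1
    · exact hchar h1
  have hfin : FiniteDimensional k L := finite_of_finrank_pos (by rw [hdim]; norm_num)
  set D : Submodule k L := (derivedIdeal k L).toSubmodule with hDdef
  -- centrality of the derived ideal
  have central : ∀ (v u : L), u ∈ D → ⁅v, u⁆ = 0 := by
    intro v u hu
    have h1 : LieModule.lowerCentralSeries k L L 1 = derivedIdeal k L := by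
      rw [LieModule.lowerCentralSeries_succ, LieModule.lowerCentralSeries_zero]
    have hm : ⁅v, u⁆ ∈ LieModule.lowerCentralSeries k L L 2 := by
      rw [LieModule.lowerCentralSeries_succ, h1]
      exact LieSubmodule.lie_mem_lie (LieSubmodule.mem_top v) hu
    rw [hc2] at hm
    exact (LieSubmodule.mem_bot _).mp hm
  have hDspan : D = Submodule.span k _ :=
    LieSubmodule.lieIdeal_oper_eq_linear_span (⊤ : LieSubmodule k L L) (⊤ : LieIdeal k L)
  -- a set lie-spans iff its linear span together with D is everything
  have lieSpan_to_sup : ∀ s : Set L, LieSubalgebra.lieSpan k L s = ⊤ →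
      Submodule.span k s ⊔ D = ⊤ := by
    intro s hs
    let A : LieSubalgebra k L :=
      { toSubmodule := Submodule.span k s ⊔ D
        lie_mem' := fun {x y} _ _ =>
          Submodule.mem_sup_right (lie_mem_derivedIdeal k L x y) }
    have hA : LieSubalgebra.lieSpan k L s ≤ A :=
      (LieSubalgebra.lieSpan_le).mpr
        (fun z hz => Submodule.mem_sup_left (Submodule.subset_span hz))
    rw [hs] at hA
    rw [eq_top_iff]
    exact fun u _ => hA (LieSubalgebra.mem_top u)
  have sup_to_lieSpan : ∀ s : Set L, Submodule.span k s ⊔ D = ⊤ →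
      LieSubalgebra.lieSpan k L s = ⊤ := by
    intro s hs
    have hsub : Submodule.span k s ≤ (LieSubalgebra.lieSpan k L s).toSubmodule :=
      Submodule.span_le.mpr LieSubalgebra.subset_lieSpan
    have hbr : ∀ u w : L, ⁅u, w⁆ ∈ LieSubalgebra.lieSpan k L s := by
      intro u w
      obtain ⟨ua, hua, ud, hud, huu⟩ :=
        Submodule.mem_sup.mp (hs ▸ Submodule.mem_top : u ∈ Submodule.span k s ⊔ D)
      obtain ⟨wa, hwa, wd, hwd, hww⟩ :=
        Submodule.mem_sup.mp (hs ▸ Submodule.mem_top : w ∈ Submodule.span k s ⊔ D)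
      have heq : ⁅u, w⁆ = ⁅ua, wa⁆ := by
        rw [← huu, ← hww, add_lie, lie_add, lie_add, central ua wd hwd, central ud wd hwd,
          show ⁅ud, wa⁆ = 0 by rw [← lie_skew, central wa ud hud, neg_zero]]
        abel
      rw [heq]
      exact (LieSubalgebra.lieSpan k L s).lie_mem (hsub hua) (hsub hwa)
    have hDle : D ≤ (LieSubalgebra.lieSpan k L s).toSubmodule := by
      rw [hDspan, Submodule.span_le]
      rintro _ ⟨a, b, rfl⟩
      exact hbr _ _
    have htop : (LieSubalgebra.lieSpan k L s).toSubmodule = ⊤ := by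
      rw [eq_top_iff, ← hs]
      exact sup_le hsub hDle
    rw [← LieSubalgebra.toSubmodule_inj, htop, LieSubalgebra.top_toSubmodule]
  -- dimension of the quotient
  have hW4 : finrank k (L ⧸ D) = 4 := by
    have hle : finrank k (L ⧸ D) ≤ 4 := by
      obtain ⟨s, hcard, hsp⟩ := hmin.1
      have hsup := lieSpan_to_sup ↑s hsp
      have hmap : Submodule.span k (⇑D.mkQ '' ↑s) = ⊤ := by
        have := congrArg (Submodule.map D.mkQ) hsup
        rwa [Submodule.map_sup, Submodule.map_span, Submodule.map_top, Submodule.range_mkQ,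
          Submodule.mkQ_map_self, sup_bot_eq] at this
      have hrange_eq : (Set.range fun i : ↥s => D.mkQ ↑i) = ⇑D.mkQ '' ↑s := by
        ext y
        constructor
        · rintro ⟨⟨z, hz⟩, rfl⟩
          exact ⟨z, hz, rfl⟩
        · rintro ⟨z, hz, rfl⟩
          exact ⟨⟨z, hz⟩, rfl⟩
      have hrge : Submodule.span k (Set.range fun i : ↥s => D.mkQ ↑i) = ⊤ := by
        rwa [hrange_eq]
      calc finrank k (L ⧸ D) ≤ Fintype.card ↥s := finrank_le_of_span_eq_top hrge
        _ = s.card := Fintype.card_coe s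
        _ = 4 := hcard
    have hge : 4 ≤ finrank k (L ⧸ D) := by
      have eW := Module.finBasis k (L ⧸ D)
      choose t ht using fun i => D.mkQ_surjective (eW i)
      have hsup := aux_sup_top eW t ht
      have hls : LieSubalgebra.lieSpan k L (Set.range t) = ⊤ := sup_to_lieSpan _ hsup
      have hcard := hmin.2 (Finset.image t Finset.univ) (by
        rwa [Finset.coe_image, Finset.coe_univ, Set.image_univ])
      calc (4 : ℕ) ≤ (Finset.image t Finset.univ).card := hcard
        _ ≤ Finset.univ.card := Finset.card_image_le
        _ = finrank k (L ⧸ D) := by simp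
    omega
  have hD4 : finrank k D = 4 := by
    have hq := Submodule.finrank_quotient_add_finrank D
    rw [hW4, hdim] at hq
    omega
  -- basis of the quotient and lifts
  set e : Basis (Fin 4) k (L ⧸ D) := (Module.finBasis k (L ⧸ D)).reindex (finCongr hW4)
    with he
  choose x hx using fun i => D.mkQ_surjective (e i)
  have hsupx : Submodule.span k (Set.range x) ⊔ D = ⊤ := aux_sup_top e x hx
  -- the six basic brackets
  set v : Fin 6 → L := ![⁅x 0, x 1⁆, ⁅x 0, x 2⁆, ⁅x 0, x 3⁆, ⁅x 1, x 2⁆, ⁅x 1, x 3⁆, ⁅x 2, x 3⁆]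
    with hv
  set φ : (Fin 6 → k) →ₗ[k] L := Fintype.linearCombination k v with hφ
  -- the span of the basic brackets is D
  have hvD : Submodule.span k (Set.range v) = D := by
    apply le_antisymm
    · rw [Submodule.span_le]
      rintro _ ⟨m, rfl⟩
      show v m ∈ D
      rw [hv, hDdef]
      fin_cases m <;>
        exact (LieSubmodule.mem_toSubmodule _).mpr (lie_mem_derivedIdeal k L _ _)
    · set B : L →ₗ[k] L →ₗ[k] L :=
        LinearMap.mk₂ k (fun a b => ⁅a, b⁆) add_lie smul_lie lie_add lie_smul with hB
      have hbr : ∀ u w : L, ⁅u, w⁆ ∈ Submodule.span k (Set.range v) := by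
        intro u w
        obtain ⟨ua, hua, ud, hud, huu⟩ :=
          Submodule.mem_sup.mp (hsupx ▸ Submodule.mem_top : u ∈ _)
        obtain ⟨wa, hwa, wd, hwd, hww⟩ :=
          Submodule.mem_sup.mp (hsupx ▸ Submodule.mem_top : w ∈ _)
        have heq : ⁅u, w⁆ = ⁅ua, wa⁆ := by
          rw [← huu, ← hww, add_lie, lie_add, lie_add, central ua wd hwd, central ud wd hwd,
            show ⁅ud, wa⁆ = 0 by rw [← lie_skew, central wa ud hud, neg_zero]]
          abel
        have hmem : B ua wa ∈ Submodule.map₂ B (Submodule.span k (Set.range x))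
            (Submodule.span k (Set.range x)) := Submodule.apply_mem_map₂ B hua hwa
        rw [Submodule.map₂_span_span] at hmem
        have himg : Set.image2 (fun m n => B m n) (Set.range x) (Set.range x) ⊆
            ↑(Submodule.span k (Set.range v)) := by
          rintro _ ⟨_, ⟨i, rfl⟩, _, ⟨j, rfl⟩, rfl⟩
          show ⁅x i, x j⁆ ∈ Submodule.span k (Set.range v)
          have hvm : ∀ m : Fin 6, v m ∈ Submodule.span k (Set.range v) :=
            fun m => Submodule.subset_span ⟨m, rfl⟩
          have hv0 : v 0 = ⁅x 0, x 1⁆ := by rw [hv]; rfl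
          have hv1 : v 1 = ⁅x 0, x 2⁆ := by rw [hv]; rfl
          have hv2 : v 2 = ⁅x 0, x 3⁆ := by rw [hv]; rfl
          have hv3 : v 3 = ⁅x 1, x 2⁆ := by rw [hv]; rfl
          have hv4 : v 4 = ⁅x 1, x 3⁆ := by rw [hv]; rfl
          have hv5 : v 5 = ⁅x 2, x 3⁆ := by rw [hv]; rfl
          fin_cases i <;> fin_cases j <;>
            first
              | (rw [show (⁅_, _⁆ : L) = 0 from lie_self _]; exact Submodule.zero_mem _)
              | exact hv0 ▸ hvm 0 | exact hv1 ▸ hvm 1 | exact hv2 ▸ hvm 2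
              | exact hv3 ▸ hvm 3 | exact hv4 ▸ hvm 4 | exact hv5 ▸ hvm 5
              | (rw [← lie_skew]
                 refine neg_mem ?_
                 first
                  | exact hv0 ▸ hvm 0 | exact hv1 ▸ hvm 1 | exact hv2 ▸ hvm 2
                  | exact hv3 ▸ hvm 3 | exact hv4 ▸ hvm 4 | exact hv5 ▸ hvm 5)
        have hfin2 := (Submodule.span_le.mpr himg) hmem
        rw [heq]
        simpa [hB] using hfin2
      rw [hDspan, Submodule.span_le]
      rintro _ ⟨a, b, rfl⟩
      exact hbr _ _
  have hrφ : LinearMap.range φ = D := by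
    rw [hφ, Fintype.range_linearCombination, hvD]
  -- kernel of φ has dimension 2
  have hkerφ : finrank k (LinearMap.ker φ) = 2 := by
    have h1 := LinearMap.finrank_range_add_finrank_ker φ
    rw [finrank_pi, hrφ, hD4] at h1
    simp only [Fintype.card_fin] at h1
    omega
  -- the key wedge identity
  have hwedge : ∀ c d : Fin 4 → k,
      φ (wedge c d) = ⁅∑ i, c i • x i, ∑ i, d i • x i⁆ := by
    intro c d
    rw [hφ, Fintype.linearCombination_apply]
    have s10 : ⁅x 1, x 0⁆ = -⁅x 0, x 1⁆ := by rw [← lie_skew]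
    have s20 : ⁅x 2, x 0⁆ = -⁅x 0, x 2⁆ := by rw [← lie_skew]
    have s30 : ⁅x 3, x 0⁆ = -⁅x 0, x 3⁆ := by rw [← lie_skew]
    have s21 : ⁅x 2, x 1⁆ = -⁅x 1, x 2⁆ := by rw [← lie_skew]
    have s31 : ⁅x 3, x 1⁆ = -⁅x 1, x 3⁆ := by rw [← lie_skew]
    have s32 : ⁅x 3, x 2⁆ = -⁅x 2, x 3⁆ := by rw [← lie_skew]
    simp only [Fin.sum_univ_four, Fin.sum_univ_six, hv,
      wedge_a0, wedge_a1, wedge_a2, wedge_a3, wedge_a4, wedge_a5,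
      vec6_zero, vec6_one, vec6_two, vec6_three, vec6_four, vec6_five,
      add_lie, lie_add, smul_lie, lie_smul, smul_smul, lie_self, smul_zero,
      add_zero, zero_add, s10, s20, s30, s21, s31, s32]
    module
  -- two independent elements of the kernel of φ
  set bK : Basis (Fin 2) k (LinearMap.ker φ) :=
    (Module.finBasis k (LinearMap.ker φ)).reindex (finCongr hkerφ) with hbK
  set P : Fin 6 → k := (bK 0 : Fin 6 → k) with hP
  set Q : Fin 6 → k := (bK 1 : Fin 6 → k) with hQ
  have hPmem : P ∈ LinearMap.ker φ := (bK 0).2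
  have hQmem : Q ∈ LinearMap.ker φ := (bK 1).2
  have hInd : ∀ s t : k, s • P + t • Q = 0 → s = 0 ∧ t = 0 := by
    intro s t hst
    have hsum0 : s • bK 0 + t • bK 1 = 0 := by
      apply Subtype.ext
      have hcoe : ((s • bK 0 + t • bK 1 : LinearMap.ker φ) : Fin 6 → k) = s • P + t • Q := rfl
      rw [hcoe, hst]
      rfl
    have hsum : (∑ i : Fin 2, (![s, t] : Fin 2 → k) i • bK i) = 0 := by
      rw [Fin.sum_univ_two]
      simpa using hsum0
    have hrepr := bK.repr_sum_self ![s, t]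
    rw [hsum, map_zero] at hrepr
    constructor
    · have h0 := congrFun hrepr 0
      simpa using h0.symm
    · have h1 := congrFun hrepr 1
      simpa using h1.symm
  -- find a nonzero kernel element satisfying the Pluecker relation
  obtain ⟨s, t, hst, hq0⟩ : ∃ s t : k, ¬(s = 0 ∧ t = 0) ∧
      (P 0 * P 5 - P 1 * P 4 + P 2 * P 3) * s ^ 2 +
        (P 0 * Q 5 + P 5 * Q 0 - P 1 * Q 4 - P 4 * Q 1 + P 2 * Q 3 + P 3 * Q 2) * s * t +
        (Q 0 * Q 5 - Q 1 * Q 4 + Q 2 * Q 3) * t ^ 2 = 0 := by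
    by_cases hA0 : P 0 * P 5 - P 1 * P 4 + P 2 * P 3 = 0
    · exact ⟨1, 0, by simp, by linear_combination hA0⟩
    · obtain ⟨r, hr⟩ := hsq ((P 0 * Q 5 + P 5 * Q 0 - P 1 * Q 4 - P 4 * Q 1 + P 2 * Q 3 + P 3 * Q 2) ^ 2
        - 4 * (P 0 * P 5 - P 1 * P 4 + P 2 * P 3) * (Q 0 * Q 5 - Q 1 * Q 4 + Q 2 * Q 3))
      refine ⟨-(P 0 * Q 5 + P 5 * Q 0 - P 1 * Q 4 - P 4 * Q 1 + P 2 * Q 3 + P 3 * Q 2) + r,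
        2 * (P 0 * P 5 - P 1 * P 4 + P 2 * P 3), fun hcon => ?_,
        by linear_combination (-(P 0 * P 5 - P 1 * P 4 + P 2 * P 3)) * hr⟩
      rcases mul_eq_zero.mp hcon.2 with h | h
      · exact absurd h h2k
      · exact hA0 h
  obtain ⟨p, hpmem, hpne, hqp⟩ : ∃ p : Fin 6 → k, p ∈ LinearMap.ker φ ∧ p ≠ 0 ∧
      p 0 * p 5 - p 1 * p 4 + p 2 * p 3 = 0 := by
    refine ⟨s • P + t • Q,
      Submodule.add_mem _ (Submodule.smul_mem _ _ hPmem) (Submodule.smul_mem _ _ hQmem),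
      fun h => hst (hInd s t h), ?_⟩
    simp only [Pi.add_apply, Pi.smul_apply, smul_eq_mul]
    linear_combination hq0
  -- extract a decomposition datum
  obtain ⟨m, hm⟩ := Function.ne_iff.mp hpne
  obtain ⟨c, d, i0, j0, hci, hdi, hdj, tt, hw⟩ :
      ∃ (c d : Fin 4 → k) (i0 j0 : Fin 4), c i0 ≠ 0 ∧ d i0 = 0 ∧ d j0 ≠ 0 ∧
        ∃ tt : k, wedge c d = tt • p := by
    have hm' : p m ≠ 0 := by simpa using hm
    fin_cases m
    · refine ⟨![p 0, 0, -(p 3), -(p 4)], ![0, p 0, p 1, p 2], 0, 1,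
        by exact hm', rfl, by exact hm', p 0, ?_⟩
      refine funext6 ?_ ?_ ?_ ?_ ?_ ?_ <;>
        simp only [wedge_a0, wedge_a1, wedge_a2, wedge_a3, wedge_a4, wedge_a5,
          Pi.smul_apply, smul_eq_mul, vec6_zero, vec6_one, vec6_two, vec6_three,
          vec6_four, vec6_five, Matrix.cons_val_zero, Matrix.cons_val_one,
          Matrix.head_cons, Matrix.cons_val_two, Matrix.cons_val_three, Matrix.tail_cons] <;>
        first
          | ring1
          | (linear_combination hqp; done)
          | (linear_combination -hqp; done)
    · refine ⟨![p 1, p 3, 0, -(p 5)], ![0, p 0, p 1, p 2], 0, 2,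
        by exact hm', rfl, by exact hm', p 1, ?_⟩
      refine funext6 ?_ ?_ ?_ ?_ ?_ ?_ <;>
        simp only [wedge_a0, wedge_a1, wedge_a2, wedge_a3, wedge_a4, wedge_a5,
          Pi.smul_apply, smul_eq_mul, vec6_zero, vec6_one, vec6_two, vec6_three,
          vec6_four, vec6_five, Matrix.cons_val_zero, Matrix.cons_val_one,
          Matrix.head_cons, Matrix.cons_val_two, Matrix.cons_val_three, Matrix.tail_cons] <;>
        first
          | ring1
          | (linear_combination hqp; done)
          | (linear_combination -hqp; done)
    · refine ⟨![p 2, p 4, p 5, 0], ![0, p 0, p 1, p 2], 0, 3,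
        by exact hm', rfl, by exact hm', p 2, ?_⟩
      refine funext6 ?_ ?_ ?_ ?_ ?_ ?_ <;>
        simp only [wedge_a0, wedge_a1, wedge_a2, wedge_a3, wedge_a4, wedge_a5,
          Pi.smul_apply, smul_eq_mul, vec6_zero, vec6_one, vec6_two, vec6_three,
          vec6_four, vec6_five, Matrix.cons_val_zero, Matrix.cons_val_one,
          Matrix.head_cons, Matrix.cons_val_two, Matrix.cons_val_three, Matrix.tail_cons] <;>
        first
          | ring1
          | (linear_combination hqp; done)
          | (linear_combination -hqp; done)
    · refine ⟨![p 1, p 3, 0, -(p 5)], ![-(p 0), 0, p 3, p 4], 1, 2,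
        by exact hm', rfl, by exact hm', p 3, ?_⟩
      refine funext6 ?_ ?_ ?_ ?_ ?_ ?_ <;>
        simp only [wedge_a0, wedge_a1, wedge_a2, wedge_a3, wedge_a4, wedge_a5,
          Pi.smul_apply, smul_eq_mul, vec6_zero, vec6_one, vec6_two, vec6_three,
          vec6_four, vec6_five, Matrix.cons_val_zero, Matrix.cons_val_one,
          Matrix.head_cons, Matrix.cons_val_two, Matrix.cons_val_three, Matrix.tail_cons] <;>
        first
          | ring1
          | (linear_combination hqp; done)
          | (linear_combination -hqp; done)
    · refine ⟨![p 2, p 4, p 5, 0], ![-(p 0), 0, p 3, p 4], 1, 3,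
        by exact hm', rfl, by exact hm', p 4, ?_⟩
      refine funext6 ?_ ?_ ?_ ?_ ?_ ?_ <;>
        simp only [wedge_a0, wedge_a1, wedge_a2, wedge_a3, wedge_a4, wedge_a5,
          Pi.smul_apply, smul_eq_mul, vec6_zero, vec6_one, vec6_two, vec6_three,
          vec6_four, vec6_five, Matrix.cons_val_zero, Matrix.cons_val_one,
          Matrix.head_cons, Matrix.cons_val_two, Matrix.cons_val_three, Matrix.tail_cons] <;>
        first
          | ring1
          | (linear_combination hqp; done)
          | (linear_combination -hqp; done)
    · refine ⟨![p 2, p 4, p 5, 0], ![-(p 1), -(p 3), 0, p 5], 2, 3,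
        by exact hm', rfl, by exact hm', p 5, ?_⟩
      refine funext6 ?_ ?_ ?_ ?_ ?_ ?_ <;>
        simp only [wedge_a0, wedge_a1, wedge_a2, wedge_a3, wedge_a4, wedge_a5,
          Pi.smul_apply, smul_eq_mul, vec6_zero, vec6_one, vec6_two, vec6_three,
          vec6_four, vec6_five, Matrix.cons_val_zero, Matrix.cons_val_one,
          Matrix.head_cons, Matrix.cons_val_two, Matrix.cons_val_three, Matrix.tail_cons] <;>
        first
          | ring1
          | (linear_combination hqp; done)
          | (linear_combination -hqp; done)
  -- the element a and its bracket partner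
  set a : L := ∑ i, c i • x i with ha
  set bb : L := ∑ i, d i • x i with hbb
  have hab : ⁅a, bb⁆ = 0 := by
    rw [ha, hbb, ← hwedge, hw, map_smul,
      show φ p = 0 from hpmem, smul_zero]
  -- the adjoint map of a factors through the quotient
  have hDker : D ≤ LinearMap.ker (LieAlgebra.ad k L a) := by
    intro u hu
    rw [LinearMap.mem_ker, LieAlgebra.ad_apply]
    exact central a u hu
  set g : (L ⧸ D) →ₗ[k] L := D.liftQ (LieAlgebra.ad k L a) hDker with hg
  have hgr : LinearMap.range g = LinearMap.range (LieAlgebra.ad k L a) :=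
    D.range_liftQ _ _
  have hgmk : ∀ u : L, g (D.mkQ u) = ⁅a, u⁆ := by
    intro u
    rw [hg]
    erw [D.liftQ_apply]
    rw [LieAlgebra.ad_apply]
  -- two independent kernel elements for g
  set ψ : (Fin 2 → k) →ₗ[k] (L ⧸ D) := Fintype.linearCombination k ![D.mkQ a, D.mkQ bb]
    with hψ
  have hπa : D.mkQ a = ∑ i, c i • e i := by
    rw [ha, map_sum]
    simp only [map_smul, hx]
  have hπb : D.mkQ bb = ∑ i, d i • e i := by
    rw [hbb, map_sum]
    simp only [map_smul, hx]
  have hψker : LinearMap.ker ψ = ⊥ := by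
    rw [LinearMap.ker_eq_bot']
    intro z hz
    have hz' : (z 0) • D.mkQ a + (z 1) • D.mkQ bb = 0 := by
      rw [hψ] at hz
      rw [← hz]
      rw [Fintype.linearCombination_apply, Fin.sum_univ_two]
      simp
    rw [hπa, hπb, Finset.smul_sum, Finset.smul_sum, ← Finset.sum_add_distrib] at hz'
    have hz'' : (∑ i, (z 0 * c i + z 1 * d i) • e i) = 0 := by
      rw [← hz']
      congr 1
      funext i
      rw [add_smul, smul_smul, smul_smul]
    have hco := e.repr_sum_self (fun i => z 0 * c i + z 1 * d i)
    rw [hz''] at hco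
    have hzc : ∀ i : Fin 4, z 0 * c i + z 1 * d i = 0 := by
      intro i
      have := congrFun hco i
      simpa using this.symm
    have hz0 : z 0 = 0 := by
      have := hzc i0
      rw [hdi, mul_zero, add_zero] at this
      exact (mul_eq_zero.mp this).resolve_right hci
    have hz1 : z 1 = 0 := by
      have := hzc j0
      rw [hz0, zero_mul, zero_add] at this
      exact (mul_eq_zero.mp this).resolve_right hdj
    funext i
    fin_cases i
    · exact hz0
    · exact hz1
  have hψrange : LinearMap.range ψ ≤ LinearMap.ker g := by
    rintro _ ⟨z, rfl⟩
    rw [LinearMap.mem_ker, hψ, Fintype.linearCombination_apply, Fin.sum_univ_two]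
    have e0 : (![D.mkQ a, D.mkQ bb] : Fin 2 → L ⧸ D) 0 = D.mkQ a := rfl
    have e1 : (![D.mkQ a, D.mkQ bb] : Fin 2 → L ⧸ D) 1 = D.mkQ bb := rfl
    rw [e0, e1, map_add, map_smul, map_smul, hgmk, hgmk, lie_self, hab, smul_zero,
      smul_zero, add_zero]
  have hker2 : 2 ≤ finrank k (LinearMap.ker g) := by
    have h1 := LinearMap.finrank_range_add_finrank_ker ψ
    rw [finrank_pi, hψker, Fintype.card_fin] at h1
    have h2 : finrank k (⊥ : Submodule k (Fin 2 → k)) = 0 := finrank_bot k _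
    rw [h2, add_zero] at h1
    calc (2 : ℕ) = finrank k (LinearMap.range ψ) := h1.symm
      _ ≤ finrank k (LinearMap.ker g) := Submodule.finrank_mono hψrange
  have hbr_le : finrank k (LinearMap.range (LieAlgebra.ad k L a)) ≤ 2 := by
    have h1 := LinearMap.finrank_range_add_finrank_ker g
    rw [hW4] at h1
    rw [← hgr]
    omega
  -- the breadth of a is 0 or 3, hence 0
  have hbmem : breadth k L a ∈ ({0, 3} : Set ℕ) := by
    rw [← hbt]
    exact ⟨a, rfl⟩
  have hbz : breadth k L a = 0 := by
    rcases hbmem with h | h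
    · exact h
    · exfalso
      rw [Set.mem_singleton_iff] at h
      rw [breadth] at h
      omega
  have hada : LieAlgebra.ad k L a = 0 := by
    rw [breadth] at hbz
    have : LinearMap.range (LieAlgebra.ad k L a) = ⊥ := Submodule.finrank_eq_zero.mp hbz
    exact LinearMap.range_eq_bot.mp this
  have hada' : ∀ u : L, ⁅a, u⁆ = 0 := by
    intro u
    have h := DFunLike.congr_fun hada u
    simpa [LieAlgebra.ad_apply] using h
  -- final contradiction: the kernel of φ is too big
  have hwr : LinearMap.range (wedgeMap c) ≤ LinearMap.ker φ := by
    rintro _ ⟨dd, rfl⟩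
    rw [LinearMap.mem_ker]
    show φ (wedge c dd) = 0
    rw [hwedge, ← ha, hada']
  have hwk : LinearMap.ker (wedgeMap c) ≤ Submodule.span k {c} := by
    intro dd hdd
    rw [LinearMap.mem_ker] at hdd
    have := wedge_eq_zero_imp hci (hdd : wedge c dd = 0)
    exact Submodule.mem_span_singleton.mpr ⟨_, this.symm⟩
  have hwk1 : finrank k (LinearMap.ker (wedgeMap c)) ≤ 1 := by
    calc finrank k (LinearMap.ker (wedgeMap c))
        ≤ finrank k (Submodule.span k ({c} : Set (Fin 4 → k))) := Submodule.finrank_mono hwk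
      _ = 1 := finrank_span_singleton (fun h => hci (by rw [h]; rfl))
  have hwr3 : 3 ≤ finrank k (LinearMap.range (wedgeMap c)) := by
    have h1 := LinearMap.finrank_range_add_finrank_ker (wedgeMap c)
    rw [finrank_pi, Fintype.card_fin] at h1
    omega
  have : (3 : ℕ) ≤ 2 := by
    calc (3 : ℕ) ≤ finrank k (LinearMap.range (wedgeMap c)) := hwr3
      _ ≤ finrank k (LinearMap.ker φ) := Submodule.finrank_mono hwr
      _ = 2 := hkerφ
  omega
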